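/- There is no finite non-commutative inverse semigroup whose commuting graph has clique number equal to 1. Equivalently, every finite non-commutative inverse semigroup contains two distinct non-central elements that commute with each other. -/

import Mathlib

/-- The commuting graph of a (non-commutative) semigroup: vertices are the
non-central elements, two distinct vertices are adjacent iff they commute. -/
def commGraph (S : Type*) [Mul S] : SimpleGraph {x : S // x ∉ Set.center S} where
  Adj a b := a ≠ b ∧ (a : S) * b = (b : S) * a
  symm := ⟨fun a b h => ⟨h.1.symm, h.2.symm⟩⟩
  loopless := ⟨fun a h => h.1 rfl⟩

/-- An inverse semigroup: a semigroup with a unary operation `⁻¹` such that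
`(x⁻¹)⁻¹ = x`, `x * x⁻¹ * x = x`, `(x*y)⁻¹ = y⁻¹ * x⁻¹`, and idempotents `x*x⁻¹` commute. -/
class InverseSemigroup (S : Type*) extends Semigroup S, Inv S where
  inv_inv : ∀ x : S, x⁻¹⁻¹ = x
  mul_inv_mul : ∀ x : S, x * x⁻¹ * x = x
  mul_inv_rev : ∀ x y : S, (x * y)⁻¹ = y⁻¹ * x⁻¹
  idem_comm : ∀ x y : S, (x * x⁻¹) * (y * y⁻¹) = (y * y⁻¹) * (x * x⁻¹)

namespace ISG

variable {S : Type*} [InverseSemigroup S]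

lemma ii (x : S) : x⁻¹⁻¹ = x := InverseSemigroup.inv_inv x
lemma mim (x : S) : x * x⁻¹ * x = x := InverseSemigroup.mul_inv_mul x
lemma mir (x y : S) : (x * y)⁻¹ = y⁻¹ * x⁻¹ := InverseSemigroup.mul_inv_rev x y

lemma inv_mul_inv (x : S) : x⁻¹ * x * x⁻¹ = x⁻¹ := by
  have h := congrArg (fun z => z⁻¹) (mim x)
  simp only [mir, ii] at h
  simpa [mul_assoc] using h

/-- every idempotent is self-inverse -/
lemma idem_self_inv {e : S} (he : e * e = e) : e⁻¹ = e := by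
  have hinv : e⁻¹ * e⁻¹ = e⁻¹ := by
    have h := congrArg (fun z => z⁻¹) he
    simpa [mir] using h
  have h := InverseSemigroup.idem_comm e e⁻¹
  rw [ii] at h
  have lhs : (e * e⁻¹) * (e⁻¹ * e) = e := by
    calc (e * e⁻¹) * (e⁻¹ * e) = e * (e⁻¹ * e⁻¹) * e := by simp [mul_assoc]
    _ = e * e⁻¹ * e := by rw [hinv]
    _ = e := mim e
  have rhs : (e⁻¹ * e) * (e * e⁻¹) = e⁻¹ := by
    calc (e⁻¹ * e) * (e * e⁻¹) = e⁻¹ * (e * e) * e⁻¹ := by simp [mul_assoc]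
    _ = e⁻¹ * e * e⁻¹ := by rw [he]
    _ = e⁻¹ := inv_mul_inv e
  rw [lhs, rhs] at h
  exact h.symm

/-- idempotents commute -/
lemma idem_comm' {e f : S} (he : e * e = e) (hf : f * f = f) : e * f = f * e := by
  have h := InverseSemigroup.idem_comm e f
  rw [idem_self_inv he, idem_self_inv hf, he, hf] at h
  exact h

lemma mem_center_iff' {z : S} : z ∈ Set.center S ↔ ∀ g : S, g * z = z * g :=
  Semigroup.mem_center_iff

lemma inv_central {c : S} (hc : c ∈ Set.center S) : c⁻¹ ∈ Set.center S := by
  rw [mem_center_iff'] at hc ⊢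
  intro y
  have h : (c * y⁻¹)⁻¹ = (y⁻¹ * c)⁻¹ := by rw [hc y⁻¹]
  simpa [mir, ii] using h

lemma inv_noncentral {c : S} (hc : c ∉ Set.center S) : c⁻¹ ∉ Set.center S := by
  intro h
  exact hc (by simpa [ii] using inv_central h)

lemma mi_idem (x : S) : (x * x⁻¹) * (x * x⁻¹) = x * x⁻¹ := by
  calc (x * x⁻¹) * (x * x⁻¹) = (x * x⁻¹ * x) * x⁻¹ := by simp [mul_assoc]
  _ = x * x⁻¹ := by rw [mim]

lemma im_idem (x : S) : (x⁻¹ * x) * (x⁻¹ * x) = x⁻¹ * x := by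
  calc (x⁻¹ * x) * (x⁻¹ * x) = (x⁻¹ * x * x⁻¹) * x := by simp [mul_assoc]
  _ = x⁻¹ * x := by rw [inv_mul_inv]

/-- if both `x*x⁻¹` and `x⁻¹*x` are central then they are equal -/
lemma mi_eq_im {x : S} (he : x * x⁻¹ ∈ Set.center S) (hf : x⁻¹ * x ∈ Set.center S) :
    x * x⁻¹ = x⁻¹ * x := by
  have heA := mem_center_iff'.mp he
  have hfA := mem_center_iff'.mp hf
  have hef := idem_comm' (mi_idem x) (im_idem x)
  have h1 : x⁻¹ * x = (x * x⁻¹) * (x⁻¹ * x) := by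
    calc x⁻¹ * x = x⁻¹ * (x * x⁻¹ * x) := by rw [mim]
    _ = (x⁻¹ * (x * x⁻¹)) * x := by rw [← mul_assoc]
    _ = ((x * x⁻¹) * x⁻¹) * x := by rw [heA x⁻¹]
    _ = (x * x⁻¹) * (x⁻¹ * x) := mul_assoc _ _ _
  have h2 : x * x⁻¹ = (x⁻¹ * x) * (x * x⁻¹) := by
    calc x * x⁻¹ = x * (x⁻¹ * x * x⁻¹) := by rw [inv_mul_inv]
    _ = (x * (x⁻¹ * x)) * x⁻¹ := by rw [← mul_assoc]
    _ = ((x⁻¹ * x) * x) * x⁻¹ := by rw [hfA x]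
    _ = (x⁻¹ * x) * (x * x⁻¹) := mul_assoc _ _ _
  calc x * x⁻¹ = (x⁻¹ * x) * (x * x⁻¹) := h2
  _ = (x * x⁻¹) * (x⁻¹ * x) := hef.symm
  _ = x⁻¹ * x := h1.symm

section Contra

variable (H : ∀ x y : S, x ∉ Set.center S → y ∉ Set.center S → x * y = y * x → x = y)

/-- the key computation: if `a = a⁻¹`, `b = b⁻¹`, `a*a` central and `a*b` central,
then `a*b = b*a`. -/
lemma caseI {a b : S} (hai : a⁻¹ = a) (hbi : b⁻¹ = b)
    (he : a * a ∈ Set.center S) (hc : a * b ∈ Set.center S) : a * b = b * a := by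
  have het : (a * a) * a = a := by have h := mim a; rwa [hai] at h
  have heA := mem_center_iff'.mp he
  have hcA := mem_center_iff'.mp hc
  have h1 : (a * a) * (b * a) = a * b := by
    calc (a * a) * (b * a) = a * ((a * b) * a) := by simp [mul_assoc]
    _ = a * (a * (a * b)) := by rw [← hcA a]
    _ = ((a * a) * a) * b := by simp [mul_assoc]
    _ = a * b := by rw [het]
  have h2 := congrArg (fun z => z⁻¹) h1
  simp only [mir, hai, hbi] at h2
  -- h2 : (a*b)*(a*a) = b*a
  have h3 : b * a = a * b := by
    calc b * a = (a * b) * (a * a) := h2.symm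
    _ = (a * a) * (a * b) := heA (a * b)
    _ = ((a * a) * a) * b := by simp [mul_assoc]
    _ = a * b := by rw [het]
  exact h3.symm

include H in
lemma caseII {a b : S} (ha : a ∉ Set.center S) (hb : b ∉ Set.center S)
    (hai : a⁻¹ = a) (hbi : b⁻¹ = b)
    (haaC : a * a ∈ Set.center S) (hbbC : b * b ∈ Set.center S)
    (hab : a * b ≠ b * a) : False := by
  have haaA := mem_center_iff'.mp haaC
  have hbbA := mem_center_iff'.mp hbbC
  have haa : (a * a) * (a * a) = a * a := by have h := mi_idem a; rwa [hai] at h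
  have hbb : (b * b) * (b * b) = b * b := by have h := mi_idem b; rwa [hbi] at h
  have hcd : (a * b) * (b * a) = (b * a) * (a * b) := by
    have l : (a * b) * (b * a) = (a * a) * (b * b) := by
      calc (a * b) * (b * a) = a * ((b * b) * a) := by simp [mul_assoc]
      _ = a * (a * (b * b)) := by rw [← hbbA a]
      _ = (a * a) * (b * b) := by rw [← mul_assoc]
    have r : (b * a) * (a * b) = (b * b) * (a * a) := by
      calc (b * a) * (a * b) = b * ((a * a) * b) := by simp [mul_assoc]
      _ = b * (b * (a * a)) := by rw [← haaA b]
      _ = (b * b) * (a * a) := by rw [← mul_assoc]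
    rw [l, r]
    exact idem_comm' haa hbb
  by_cases hcC : a * b ∈ Set.center S
  · exact hab (caseI hai hbi haaC hcC)
  · by_cases hdC : b * a ∈ Set.center S
    · exact hab (caseI hbi hai hbbC hdC).symm
    · exact hab (H _ _ hcC hdC hcd)

include H in
/-- no non-central `x ≠ e₀` can have `x * x⁻¹ = e₀` for the (unique) non-central
idempotent `e₀`. -/
lemma lemB {e₀ : S} (h0 : e₀ * e₀ = e₀) (h0c : e₀ ∉ Set.center S)
    {x : S} (hx : x ∉ Set.center S) (hne : x ≠ e₀) (hxe : x * x⁻¹ = e₀) : False := by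
  have he0x : e₀ * x = x := by rw [← hxe]; exact mim x
  have hxE : x * e₀ ≠ x := by
    intro h
    exact hne (H x e₀ hx h0c (by rw [h, he0x]))
  have hxf : x * (x⁻¹ * x) = x := by rw [← mul_assoc]; exact mim x
  have hfne : x⁻¹ * x ≠ e₀ := by
    intro h
    exact hxE (by rw [← h]; exact hxf)
  have hfC : x⁻¹ * x ∈ Set.center S := by
    by_contra h
    exact hfne (H _ _ h h0c (idem_comm' (im_idem x) h0))
  have hxx : x * x ≠ x := by
    intro h
    exact hne (H x e₀ hx h0c (idem_comm' h h0))
  have hxxC : x * x ∈ Set.center S := by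
    by_contra h
    exact hxx (H x (x * x) hx h (mul_assoc x x x).symm).symm
  apply hxE
  calc x * e₀ = x * (x * x⁻¹) := by rw [hxe]
  _ = (x * x) * x⁻¹ := by rw [← mul_assoc]
  _ = x⁻¹ * (x * x) := (mem_center_iff'.mp hxxC x⁻¹).symm
  _ = (x⁻¹ * x) * x := by rw [← mul_assoc]
  _ = x * (x⁻¹ * x) := (mem_center_iff'.mp hfC x).symm
  _ = x := hxf

include H in
/-- the case of a non-central element of "type I" against the non-central idempotent. -/
lemma caseE {e₀ : S} (h0 : e₀ * e₀ = e₀) (h0c : e₀ ∉ Set.center S)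
    {t : S} (ht : t ∉ Set.center S) (hti : t⁻¹ = t) (hteC : t * t ∈ Set.center S)
    (hne : t * e₀ ≠ e₀ * t) : False := by
  have het : (t * t) * t = t := by have h := mim t; rwa [hti] at h
  have het' : t * (t * t) = t := by rw [← mul_assoc]; exact het
  have hcE := mem_center_iff'.mp hteC
  have k1 : (t * t) * (e₀ * t) = e₀ * t := by
    calc (t * t) * (e₀ * t) = ((t * t) * e₀) * t := (mul_assoc _ _ _).symm
    _ = (e₀ * (t * t)) * t := by rw [hcE e₀]
    _ = e₀ * ((t * t) * t) := mul_assoc _ _ _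
    _ = e₀ * t := by rw [het]
  have hz : (t * e₀ * t) * (t * e₀ * t) = t * e₀ * t := by
    calc (t * e₀ * t) * (t * e₀ * t) = (t * e₀) * ((t * t) * (e₀ * t)) := by simp [mul_assoc]
    _ = (t * e₀) * (e₀ * t) := by rw [k1]
    _ = (t * (e₀ * e₀)) * t := by simp [mul_assoc]
    _ = (t * e₀) * t := by rw [h0]
  have r : (t * e₀ * t) * t = t * e₀ := by
    calc (t * e₀ * t) * t = t * (e₀ * (t * t)) := by simp [mul_assoc]
    _ = t * ((t * t) * e₀) := by rw [hcE e₀]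
    _ = (t * (t * t)) * e₀ := (mul_assoc _ _ _).symm
    _ = t * e₀ := by rw [het']
  by_cases hzC : t * e₀ * t ∈ Set.center S
  · have h2 := mem_center_iff'.mp hzC t
    -- h2 : t * (t*e₀*t) = (t*e₀*t) * t
    have l : t * (t * e₀ * t) = e₀ * t := by
      calc t * (t * e₀ * t) = ((t * t) * e₀) * t := by simp [mul_assoc]
      _ = (e₀ * (t * t)) * t := by rw [hcE e₀]
      _ = e₀ * ((t * t) * t) := mul_assoc _ _ _
      _ = e₀ * t := by rw [het]
    rw [l, r] at h2
    exact hne h2.symm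
  · have hz0 : t * e₀ * t = e₀ := H _ _ hzC h0c (idem_comm' hz h0)
    rw [hz0] at r
    exact hne r.symm

end Contra

/-- main existence lemma: a non-commutative inverse semigroup has two distinct
non-central commuting elements. -/
lemma exists_comm_pair (hnc : ∃ a b : S, a * b ≠ b * a) :
    ∃ x y : S, x ≠ y ∧ x ∉ Set.center S ∧ y ∉ Set.center S ∧ x * y = y * x := by
  by_contra Hc
  push_neg at Hc
  have H : ∀ x y : S, x ∉ Set.center S → y ∉ Set.center S → x * y = y * x → x = y := by
    intro x y hx hy hxy
    by_contra hne
    exact Hc x y hne hx hy hxy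
  obtain ⟨a, b, hab⟩ := hnc
  have ha : a ∉ Set.center S := by
    intro h
    exact hab (mem_center_iff'.mp h b).symm
  have hb : b ∉ Set.center S := by
    intro h
    exact hab (mem_center_iff'.mp h a)
  by_cases hE : ∃ e₀ : S, e₀ * e₀ = e₀ ∧ e₀ ∉ Set.center S
  · obtain ⟨e₀, h0, h0c⟩ := hE
    have typeI : ∀ x : S, x ∉ Set.center S → x ≠ e₀ → x⁻¹ = x ∧ x * x ∈ Set.center S := by
      intro x hx hne
      have hmi : x * x⁻¹ ∈ Set.center S := by
        by_contra h
        have hxe : x * x⁻¹ = e₀ := H _ _ h h0c (idem_comm' (mi_idem x) h0)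
        exact lemB H h0 h0c hx hne hxe
      have him : x⁻¹ * x ∈ Set.center S := by
        by_contra h
        have hxe : x⁻¹ * x = e₀ := H _ _ h h0c (idem_comm' (im_idem x) h0)
        have hx' : x⁻¹ ∉ Set.center S := inv_noncentral hx
        have hne' : x⁻¹ ≠ e₀ := by
          intro hh
          apply hne
          rw [← ii x, hh, idem_self_inv h0]
        exact lemB H h0 h0c hx' hne' (by rw [ii]; exact hxe)
      have hxi : x⁻¹ = x := (H x x⁻¹ hx (inv_noncentral hx) (mi_eq_im hmi him)).symm
      exact ⟨hxi, by rwa [hxi] at hmi⟩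
    by_cases hae : a = e₀
    · have hbe : b ≠ e₀ := by
        intro h
        exact hab (by rw [hae, h])
      obtain ⟨hbi, hbbC⟩ := typeI b hb hbe
      refine caseE H h0 h0c hb hbi hbbC (fun h => hab ?_)
      rw [hae]
      exact h.symm
    · by_cases hbe : b = e₀
      · obtain ⟨hai, haaC⟩ := typeI a ha hae
        refine caseE H h0 h0c ha hai haaC (fun h => hab ?_)
        rw [hbe]
        exact h
      · obtain ⟨hai, haaC⟩ := typeI a ha hae
        obtain ⟨hbi, hbbC⟩ := typeI b hb hbe
        exact caseII H ha hb hai hbi haaC hbbC hab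
  · push_neg at hE
    have typeI : ∀ x : S, x ∉ Set.center S → x⁻¹ = x ∧ x * x ∈ Set.center S := by
      intro x hx
      have hmi : x * x⁻¹ ∈ Set.center S := hE _ (mi_idem x)
      have him : x⁻¹ * x ∈ Set.center S := hE _ (im_idem x)
      have hxi : x⁻¹ = x := (H x x⁻¹ hx (inv_noncentral hx) (mi_eq_im hmi him)).symm
      exact ⟨hxi, by rwa [hxi] at hmi⟩
    obtain ⟨hai, haaC⟩ := typeI a ha
    obtain ⟨hbi, hbbC⟩ := typeI b hb
    exact caseII H ha hb hai hbi haaC hbbC hab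

end ISG

theorem inverse_semigroup_cliqueNum_ne_one {S : Type*} [InverseSemigroup S] [Fintype S]
    (hnc : ∃ a b : S, a * b ≠ b * a) :
    (commGraph S).cliqueNum ≠ 1 ∧
    ∃ x y : S, x ≠ y ∧ x ∉ Set.center S ∧ y ∉ Set.center S ∧ x * y = y * x := by
  have key := ISG.exists_comm_pair hnc
  refine ⟨?_, key⟩
  obtain ⟨x, y, hxy, hx, hy, hcomm⟩ := key
  classical
  letI : Fintype {z : S // z ∉ Set.center S} := Fintype.ofFinite _
  set t : Finset {z : S // z ∉ Set.center S} := {⟨x, hx⟩, ⟨y, hy⟩} with ht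
  have hne : (⟨x, hx⟩ : {z : S // z ∉ Set.center S}) ≠ ⟨y, hy⟩ := by
    simp [Subtype.ext_iff, hxy]
  have hc : (commGraph S).IsClique (t : Set _) := by
    intro u hu v hv huv
    simp only [ht, Finset.coe_insert, Finset.coe_singleton, Set.mem_insert_iff,
      Set.mem_singleton_iff] at hu hv
    rcases hu with hu | hu <;> rcases hv with hv | hv <;> subst hu <;> subst hv
    · exact absurd rfl huv
    · exact ⟨huv, hcomm⟩
    · exact ⟨huv, hcomm.symm⟩
    · exact absurd rfl huv
  have hcard : t.card = 2 := by
    rw [ht, Finset.card_insert_of_notMem (by simpa using hne), Finset.card_singleton]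
  have hle : t.card ≤ (commGraph S).cliqueNum :=
    @SimpleGraph.IsClique.card_le_cliqueNum _ _ _ t hc
  omega
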